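/- arXiv:2511.13117 — 2 statements merged into one kernel-verified Lean document; each statement's English description precedes it below -/
import Mathlib

section
/- Let the parameter error evolve as ψ̃_{t+1} = (I − γ_tᵀ γ_t) ψ̃_t where γ_t = Γ_t / sqrt(1 + tr(Γ_tᵀ Γ_t)) for some matrix Γ_t. Then the Lyapunov function V_t = ‖ψ̃_t‖² satisfies V_{t+1} − V_t ≤ −‖γ_t ψ̃_t‖² for all t. -/
open Matrix

/-- One-step decrease of the Lyapunov function V_t = ‖ψ̃_t‖² along the error dynamics
ψ̃_{t+1} = (I − γ_tᵀγ_t) ψ̃_t, where γ_t = Γ_t / √(1 + tr(Γ_tᵀΓ_t)). -/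
theorem lyapunov_decrease {r h : ℕ} (Γ γ : ℕ → Matrix (Fin r) (Fin h) ℝ)
    (ψ : ℕ → Fin h → ℝ)
    (hγ : ∀ t, γ t = (Real.sqrt (1 + Matrix.trace ((Γ t)ᵀ * Γ t)))⁻¹ • Γ t)
    (hdyn : ∀ t, ψ (t + 1) = ((1 : Matrix (Fin h) (Fin h) ℝ) - (γ t)ᵀ * γ t) *ᵥ ψ t) :
    ∀ t, (∑ i, (ψ (t + 1) i) ^ 2) - (∑ i, (ψ t i) ^ 2) ≤ - ∑ j, ((γ t *ᵥ ψ t) j) ^ 2 := by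
  intro t
  set A := γ t with hA
  set x := ψ t with hx
  set y := A *ᵥ x with hy
  set z := Aᵀ *ᵥ y with hz
  set T := Matrix.trace ((Γ t)ᵀ * Γ t) with hT
  have hTval : T = ∑ j, ∑ i, (Γ t i j) ^ 2 := by
    rw [hT, Matrix.trace]
    exact Finset.sum_congr rfl fun j _ => by
      simp [Matrix.diag, Matrix.mul_apply, Matrix.transpose_apply, sq]
  have hT0 : (0:ℝ) ≤ T := by
    rw [hTval]
    exact Finset.sum_nonneg fun j _ => Finset.sum_nonneg fun i _ => sq_nonneg _
  have h1T : (0:ℝ) < 1 + T := by linarith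
  -- Frobenius norm of A is at most 1
  have hfrob : (∑ j, ∑ i, (A i j) ^ 2) ≤ 1 := by
    have hAij : ∀ i j, A i j = (Real.sqrt (1 + T))⁻¹ * Γ t i j := by
      intro i j; rw [hA, hγ t]; rfl
    have hsum : (∑ j, ∑ i, (A i j) ^ 2) = ((Real.sqrt (1 + T))⁻¹)^2 * T := by
      simp only [hAij, mul_pow, ← Finset.mul_sum, hTval]
    rw [hsum, inv_pow, Real.sq_sqrt (le_of_lt h1T), inv_mul_le_iff₀ h1T]
    linarith
  have hzdef : ∀ i, z i = ∑ j, A j i * y j := by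
    intro i
    simp [hz, Matrix.mulVec, dotProduct, Matrix.transpose_apply]
  have hydef : ∀ j, y j = ∑ i, A j i * x i := by
    intro j
    simp [hy, Matrix.mulVec, dotProduct]
  -- key identity: ⟪x, z⟫ = ‖y‖²
  have hxz : (∑ i, x i * z i) = ∑ j, y j ^ 2 := by
    calc (∑ i, x i * z i) = ∑ i, ∑ j, y j * (A j i * x i) := by
          simp only [hzdef, Finset.mul_sum]
          exact Finset.sum_congr rfl fun i _ => Finset.sum_congr rfl fun j _ => by ring
      _ = ∑ j, ∑ i, y j * (A j i * x i) := Finset.sum_comm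
      _ = ∑ j, y j * ∑ i, A j i * x i := by simp [Finset.mul_sum]
      _ = ∑ j, y j ^ 2 := by simp only [← hydef, sq]
  -- Cauchy–Schwarz bound: ‖z‖² ≤ ‖A‖_F² ‖y‖² ≤ ‖y‖²
  have hzbound : (∑ i, z i ^ 2) ≤ ∑ j, y j ^ 2 := by
    have hCS : ∀ i, z i ^ 2 ≤ (∑ j, (A j i) ^ 2) * (∑ j, y j ^ 2) := by
      intro i
      rw [hzdef i]
      exact Finset.sum_mul_sq_le_sq_mul_sq Finset.univ (fun j => A j i) y
    calc (∑ i, z i ^ 2) ≤ ∑ i, (∑ j, (A j i) ^ 2) * (∑ j, y j ^ 2) :=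
          Finset.sum_le_sum fun i _ => hCS i
      _ = (∑ i, ∑ j, (A j i) ^ 2) * (∑ j, y j ^ 2) := (Finset.sum_mul _ _ _).symm
      _ ≤ 1 * (∑ j, y j ^ 2) :=
          mul_le_mul_of_nonneg_right hfrob (Finset.sum_nonneg fun j _ => sq_nonneg _)
      _ = ∑ j, y j ^ 2 := one_mul _
  -- expand the dynamics
  have hpsi : ∀ i, ψ (t + 1) i = x i - z i := by
    intro i
    rw [hdyn t, Matrix.sub_mulVec, Matrix.one_mulVec]
    simp [hz, hy, ← Matrix.mulVec_mulVec, ← hA, ← hx]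
  have hexp : (∑ i, (ψ (t + 1) i) ^ 2)
      = (∑ i, x i ^ 2) - 2 * (∑ i, x i * z i) + ∑ i, z i ^ 2 := by
    simp only [hpsi, sub_sq]
    rw [Finset.sum_add_distrib, Finset.sum_sub_distrib, Finset.mul_sum]
    ring_nf
  rw [hexp, hxz]
  linarith
end

section
/- Let S_t be bounded uniformly (‖S_t‖ ≤ B_S), W_t bounded (‖W_t‖ ≤ B_W), S_T positive definite with λ_min(S_TᵀS_T) = μ > 0, and define γ_t = Γ_t / sqrt(1 + tr(Γ_tᵀΓ_t)) with Γ_t as the stacked regressor including the κ₃ S_T block. Then there exists κ > 0 (depending on μ, B_S, B_W, κ₁, κ₂, κ₃) such that λ_min(γ_tᵀγ_t) ≥ κ for all t. -/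
open Matrix

lemma aux_smul_psd {n : Type*} [Fintype n] {A : Matrix n n ℝ} {c : ℝ} (hc : 0 ≤ c)
    (hA : A.PosSemidef) : (c • A).PosSemidef := by
  refine posSemidef_iff_dotProduct_mulVec.mpr ⟨?_, fun x => ?_⟩
  · unfold Matrix.IsHermitian
    rw [conjTranspose_smul, hA.1]
    simp
  · simp only [smul_mulVec, dotProduct_smul, smul_eq_mul]
    exact mul_nonneg hc (hA.dotProduct_mulVec_nonneg x)

lemma aux_tm_psd {m n : Type*} [Fintype m] [Fintype n] (A : Matrix m n ℝ) :
    (Aᵀ * A).PosSemidef := by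
  have := Matrix.posSemidef_conjTranspose_mul_self A
  rwa [Matrix.conjTranspose_eq_transpose_of_trivial] at this

lemma aux_trace_tm {m n : Type*} [Fintype m] [Fintype n] (A : Matrix m n ℝ) :
    Matrix.trace (Aᵀ * A) = ∑ i, ∑ j, (A i j) ^ 2 := by
  rw [Finset.sum_comm]
  simp [Matrix.trace, Matrix.diag, Matrix.mul_apply, Matrix.transpose_apply, sq]

/-- Under uniform boundedness of W and S and positive definiteness of S_T, the normalized
stacked-regressor Gramian γ_tᵀγ_t admits a uniform positive lower eigenvalue bound. -/
theorem uniform_eigenvalue_lower_bound {k h r : ℕ} (κ₁ κ₂ κ₃ BW BS μ : ℝ)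
    (hκ₁ : 0 < κ₁) (hκ₂ : 0 < κ₂) (hκ₃ : 0 < κ₃) (hμ : 0 < μ)
    (W : ℕ → Matrix (Fin k) (Fin h) ℝ) (S : ℕ → Matrix (Fin h) (Fin h) ℝ)
    (ST : Matrix (Fin h) (Fin h) ℝ)
    (Γ γ : ℕ → Matrix (Fin r) (Fin h) ℝ)
    (hWbdd : ∀ t, (∑ i, ∑ j, (W t i j) ^ 2) ≤ BW ^ 2)
    (hSbdd : ∀ t, (∑ i, ∑ j, (S t i j) ^ 2) ≤ BS ^ 2)
    (hSTpd : ST.PosDef)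
    (hSTμ : (STᵀ * ST - μ • (1 : Matrix (Fin h) (Fin h) ℝ)).PosSemidef)
    (hΓ : ∀ t, (Γ t)ᵀ * Γ t =
      κ₁ • ((W (t + 1))ᵀ * W (t + 1)) + κ₂ • ((S (t + 1))ᵀ * S (t + 1)) + κ₃ • (STᵀ * ST))
    (hγ : ∀ t, γ t = (Real.sqrt (1 + Matrix.trace ((Γ t)ᵀ * Γ t)))⁻¹ • Γ t) :
    ∃ κ : ℝ, 0 < κ ∧ ∀ t,
      ((γ t)ᵀ * γ t - κ • (1 : Matrix (Fin h) (Fin h) ℝ)).PosSemidef := by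
  set tST : ℝ := ∑ i, ∑ j, (ST i j) ^ 2 with htST
  have htSTnn : 0 ≤ tST := Finset.sum_nonneg fun i _ =>
    Finset.sum_nonneg fun j _ => sq_nonneg _
  have hBW : 0 ≤ BW ^ 2 := le_trans (Finset.sum_nonneg fun i _ =>
    Finset.sum_nonneg fun j _ => sq_nonneg _) (hWbdd 0)
  have hBS : 0 ≤ BS ^ 2 := le_trans (Finset.sum_nonneg fun i _ =>
    Finset.sum_nonneg fun j _ => sq_nonneg _) (hSbdd 0)
  set D : ℝ := κ₁ * BW ^ 2 + κ₂ * BS ^ 2 + κ₃ * tST with hD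
  have hDnn : 0 ≤ D := by positivity
  have hDpos : 0 < 1 + D := by linarith
  refine ⟨κ₃ * μ / (1 + D), by positivity, fun t => ?_⟩
  set c : ℝ := 1 + Matrix.trace ((Γ t)ᵀ * Γ t) with hc
  have htrnn : 0 ≤ Matrix.trace ((Γ t)ᵀ * Γ t) := by
    rw [aux_trace_tm]
    exact Finset.sum_nonneg fun i _ => Finset.sum_nonneg fun j _ => sq_nonneg _
  have hc1 : 1 ≤ c := by simp [hc]; linarith
  have hcpos : 0 < c := by linarith
  have hcD : c ≤ 1 + D := by
    have : Matrix.trace ((Γ t)ᵀ * Γ t) ≤ D := by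
      rw [hΓ t, trace_add, trace_add, trace_smul, trace_smul, trace_smul,
        aux_trace_tm, aux_trace_tm, aux_trace_tm]
      simp only [smul_eq_mul, hD]
      gcongr
      · exact hWbdd (t + 1)
      · exact hSbdd (t + 1)
    simp only [hc]; linarith
  -- γᵀγ = c⁻¹ • ΓᵀΓ
  have hγγ : (γ t)ᵀ * γ t = c⁻¹ • ((Γ t)ᵀ * Γ t) := by
    rw [hγ t]
    rw [transpose_smul, Matrix.smul_mul, Matrix.mul_smul, smul_smul]
    congr 1
    rw [← mul_inv, Real.mul_self_sqrt hcpos.le]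
  have key : ((γ t)ᵀ * γ t - (κ₃ * μ / (1 + D)) • (1 : Matrix (Fin h) (Fin h) ℝ)) =
      c⁻¹ • ((Γ t)ᵀ * Γ t - (κ₃ * μ) • (1 : Matrix (Fin h) (Fin h) ℝ)) +
      (c⁻¹ * (κ₃ * μ) - κ₃ * μ / (1 + D)) • (1 : Matrix (Fin h) (Fin h) ℝ) := by
    rw [hγγ, smul_sub, smul_smul, sub_smul]
    abel
  rw [key]
  refine Matrix.PosSemidef.add (aux_smul_psd (by positivity) ?_) (aux_smul_psd ?_ ?_)
  · -- ΓᵀΓ - κ₃μ I PSD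
    have : (Γ t)ᵀ * Γ t - (κ₃ * μ) • (1 : Matrix (Fin h) (Fin h) ℝ) =
        κ₁ • ((W (t + 1))ᵀ * W (t + 1)) + κ₂ • ((S (t + 1))ᵀ * S (t + 1)) +
        κ₃ • (STᵀ * ST - μ • (1 : Matrix (Fin h) (Fin h) ℝ)) := by
      rw [hΓ t, smul_sub, smul_smul]
      abel
    rw [this]
    exact Matrix.PosSemidef.add
      (Matrix.PosSemidef.add (aux_smul_psd hκ₁.le (aux_tm_psd _))
        (aux_smul_psd hκ₂.le (aux_tm_psd _)))
      (aux_smul_psd hκ₃.le hSTμ)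
  · -- coefficient nonneg
    have hinv : (1 + D)⁻¹ ≤ c⁻¹ := by gcongr
    have h1 : κ₃ * μ / (1 + D) ≤ c⁻¹ * (κ₃ * μ) := by
      rw [div_eq_mul_inv, mul_comm c⁻¹]
      gcongr
    linarith
  · exact Matrix.PosSemidef.one
end
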